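/- Fix λ > 0 and a c.d.f. F^A supported on [A,∞) with ∫₀^∞ (1 − F^A(u)) du = M < ∞. Define for real s > 0, Φ(s) = 1 − (1/(λ+s)) (∫₀^∞ e^{−st − λ∫₀^t (1−F^A(u)) du} dt)^{−1}. Then lim_{s→0⁺} Φ(s) = 1, and lim_{s→0⁺} (1 − Φ(s))/s = (1/λ) e^{λM}; in particular, if Φ is the Laplace transform E[e^{−sτ}] of a nonnegative random variable τ, then E[τ] = (1/λ) e^{λM}. -/

import Mathlib

open MeasureTheory Set intervalIntegral

/-- Takács' expression for the Laplace transform of the renewal time at `0` of the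
`M/G/∞` queue with arrival rate `λ` and service c.d.f. `FA`. -/
noncomputable def takacsPhi (lam : ℝ) (FA : ℝ → ℝ) (s : ℝ) : ℝ :=
  1 - (1 / (lam + s)) *
    (∫ t in Set.Ioi (0:ℝ), Real.exp (-s * t - lam * ∫ u in (0:ℝ)..t, (1 - FA u)))⁻¹

open Filter Real

section
variable (lam M : ℝ) (FA : ℝ → ℝ)

lemma takacs_aux_intInt (hmeas : Measurable FA) (h01 : ∀ x, FA x ∈ Set.Icc (0:ℝ) 1)
    (a b : ℝ) : IntervalIntegrable (fun u => 1 - FA u) volume a b := by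
  have hb : ∀ u : ℝ, ‖1 - FA u‖ ≤ 1 := by
    intro u
    rw [Real.norm_eq_abs, abs_le]
    have := h01 u; simp only [Set.mem_Icc] at this; constructor <;> linarith [this.1, this.2]
  constructor <;>
  · refine ((integrableOn_const (C := (1:ℝ)) measure_Ioc_lt_top.ne)).mono'
      ((measurable_const.sub hmeas).aestronglyMeasurable) ?_
    exact ae_of_all _ fun u => hb u

lemma takacs_aux_Gcont (hmeas : Measurable FA) (h01 : ∀ x, FA x ∈ Set.Icc (0:ℝ) 1) :
    Continuous (fun t => ∫ u in (0:ℝ)..t, (1 - FA u)) :=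
  intervalIntegral.continuous_primitive (takacs_aux_intInt FA hmeas h01) 0

lemma takacs_aux_Gmono (hmeas : Measurable FA) (h01 : ∀ x, FA x ∈ Set.Icc (0:ℝ) 1) :
    Monotone (fun t => ∫ u in (0:ℝ)..t, (1 - FA u)) := by
  intro t1 t2 h
  have hadd := intervalIntegral.integral_add_adjacent_intervals
    (takacs_aux_intInt FA hmeas h01 0 t1) (takacs_aux_intInt FA hmeas h01 t1 t2)
  have hnn : 0 ≤ ∫ u in t1..t2, (1 - FA u) :=
    intervalIntegral.integral_nonneg h (fun u _ => by have := h01 u; simp at this; linarith [this.2])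
  simp only []
  linarith
end

lemma takacs_aux_key {lam M : ℝ} {FA : ℝ → ℝ} (hlam : 0 < lam)
    (hmeas : Measurable FA) (h01 : ∀ x, FA x ∈ Set.Icc (0:ℝ) 1)
    (hMint : IntegrableOn (fun u => 1 - FA u) (Set.Ioi 0))
    (hM : ∫ u in Set.Ioi (0:ℝ), (1 - FA u) = M) :
    Tendsto (fun s : ℝ =>
        s * ∫ t in Set.Ioi (0:ℝ), Real.exp (-s * t - lam * ∫ u in (0:ℝ)..t, (1 - FA u)))
      (nhdsWithin 0 (Set.Ioi 0)) (nhds (Real.exp (-(lam * M)))) := by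
  set G : ℝ → ℝ := fun t => ∫ u in (0:ℝ)..t, (1 - FA u) with hGdef
  have hGcont : Continuous G := takacs_aux_Gcont FA hmeas h01
  have hGnn : ∀ t : ℝ, 0 ≤ t → 0 ≤ G t := fun t ht =>
    intervalIntegral.integral_nonneg ht
      (fun u _ => by have := h01 u; simp only [Set.mem_Icc] at this; linarith [this.2])
  have hGtop : Tendsto G atTop (nhds M) := by
    rw [← hM]; exact intervalIntegral_tendsto_integral_Ioi 0 hMint tendsto_id
  -- substitution
  have hsub : ∀ s : ℝ, 0 < s →
      s * (∫ t in Set.Ioi (0:ℝ), Real.exp (-s * t - lam * G t)) =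
      ∫ u in Set.Ioi (0:ℝ), Real.exp (-u) * Real.exp (-(lam * G (u / s))) := by
    intro s hs
    have h := integral_comp_mul_left_Ioi
      (fun x => Real.exp (-x) * Real.exp (-(lam * G (x / s)))) 0 hs
    simp only [mul_zero, smul_eq_mul] at h
    have heq : ∀ t : ℝ, Real.exp (-s * t - lam * G t) =
        Real.exp (-(s * t)) * Real.exp (-(lam * G ((s * t) / s))) := by
      intro t
      rw [mul_div_cancel_left₀ _ hs.ne', ← Real.exp_add]
      ring_nf
    calc s * (∫ t in Set.Ioi (0:ℝ), Real.exp (-s * t - lam * G t))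
        = s * ∫ t in Set.Ioi (0:ℝ),
            Real.exp (-(s * t)) * Real.exp (-(lam * G ((s * t) / s))) := by
          congr 1; exact setIntegral_congr_fun measurableSet_Ioi (fun t _ => heq t)
      _ = s * (s⁻¹ * ∫ u in Set.Ioi (0:ℝ), Real.exp (-u) * Real.exp (-(lam * G (u / s)))) := by
          rw [h]
      _ = _ := by field_simp
  -- DCT
  have hDCT : Tendsto (fun s : ℝ =>
      ∫ u in Set.Ioi (0:ℝ), Real.exp (-u) * Real.exp (-(lam * G (u / s))))
      (nhdsWithin 0 (Set.Ioi 0)) (nhds (Real.exp (-(lam * M)))) := by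
    have hbint : IntegrableOn (fun u : ℝ => Real.exp (-u)) (Set.Ioi 0) := by
      simpa [neg_one_mul] using exp_neg_integrableOn_Ioi (a := (0:ℝ)) (b := 1) one_pos
    have hlim : ∫ u in Set.Ioi (0:ℝ), Real.exp (-u) * Real.exp (-(lam * M)) =
        Real.exp (-(lam * M)) := by
      rw [MeasureTheory.integral_mul_const, integral_exp_neg_Ioi_zero, one_mul]
    rw [← hlim]
    apply MeasureTheory.tendsto_integral_filter_of_dominated_convergence (fun u => Real.exp (-u))
    · filter_upwards [self_mem_nhdsWithin] with s hs
      have : Continuous fun u : ℝ => Real.exp (-u) * Real.exp (-(lam * G (u / s))) := by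
        fun_prop
      exact this.aestronglyMeasurable
    · filter_upwards [self_mem_nhdsWithin] with s hs
      rw [Set.mem_Ioi] at hs
      refine (ae_restrict_iff' measurableSet_Ioi).2 (ae_of_all _ fun u hu => ?_)
      rw [Set.mem_Ioi] at hu
      have h1 : Real.exp (-(lam * G (u / s))) ≤ 1 := by
        rw [← Real.exp_zero]
        apply Real.exp_le_exp.2
        have := hGnn (u / s) (le_of_lt (div_pos hu hs))
        nlinarith [hlam.le]
      have h2 : 0 < Real.exp (-u) := Real.exp_pos _
      rw [Real.norm_eq_abs, abs_of_nonneg (by positivity)]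
      nlinarith
    · exact hbint
    · refine (ae_restrict_iff' measurableSet_Ioi).2 (ae_of_all _ fun u hu => ?_)
      rw [Set.mem_Ioi] at hu
      have h1 : Tendsto (fun s : ℝ => u / s) (nhdsWithin 0 (Set.Ioi 0)) atTop := by
        simp only [div_eq_mul_inv]
        exact Tendsto.const_mul_atTop hu tendsto_inv_nhdsGT_zero
      have h2 : Tendsto (fun s : ℝ => G (u / s)) (nhdsWithin 0 (Set.Ioi 0)) (nhds M) :=
        hGtop.comp h1
      have h3 : Tendsto (fun s : ℝ => Real.exp (-(lam * G (u / s))))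
          (nhdsWithin 0 (Set.Ioi 0)) (nhds (Real.exp (-(lam * M)))) :=
        (Real.continuous_exp.tendsto _).comp ((h2.const_mul lam).neg)
      exact h3.const_mul _
  refine Tendsto.congr' ?_ hDCT
  filter_upwards [self_mem_nhdsWithin] with s hs
  exact (hsub s hs).symm

-- pointwise limit for the expectation part
lemma takacs_aux_slope (x : ℝ) :
    Tendsto (fun s : ℝ => (1 - Real.exp (-s * x)) / s) (nhdsWithin 0 (Set.Ioi 0)) (nhds x) := by
  have hf : HasDerivAt (fun s : ℝ => 1 - Real.exp (-s * x)) x 0 := by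
    have h1 : HasDerivAt (fun s : ℝ => -s * x) (-1 * x) 0 := by
      simpa using ((hasDerivAt_id (0:ℝ)).neg.mul_const x)
    have h2 := h1.exp
    have h3 := h2.const_sub 1
    simp only [neg_zero, zero_mul, neg_mul, Real.exp_zero, one_mul] at h3
    simpa using h3
  have h := hasDerivAt_iff_tendsto_slope.1 hf
  have hmono : nhdsWithin (0:ℝ) (Set.Ioi 0) ≤ nhdsWithin 0 {(0:ℝ)}ᶜ :=
    nhdsWithin_mono 0 (fun y hy => ne_of_gt hy)
  refine Tendsto.congr (fun s => ?_) (h.mono_left hmono)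
  simp [slope_def_field]

/-- for a service c.d.f. `F^A` supported on `[A,∞)` with integrated tail
`M = ∫₀^∞ (1−F^A) < ∞`, the Takács formula `Φ` satisfies `Φ(s) → 1` and
`(1−Φ(s))/s → (1/λ) e^{λM}` as `s → 0⁺`; in particular, if `Φ` is the Laplace transform
of a nonnegative random variable `τ`, then `E[τ] = (1/λ) e^{λM}`. -/
theorem takacs_renewal_mean
    (lam A M : ℝ) (hlam : 0 < lam) (hA : 0 ≤ A)
    (FA : ℝ → ℝ) (hmeas : Measurable FA) (hmono : Monotone FA)
    (h01 : ∀ x, FA x ∈ Set.Icc (0:ℝ) 1) (hsupp : ∀ x < A, FA x = 0)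
    (hMint : IntegrableOn (fun u => 1 - FA u) (Set.Ioi 0))
    (hM : ∫ u in Set.Ioi (0:ℝ), (1 - FA u) = M) :
    Filter.Tendsto (takacsPhi lam FA) (nhdsWithin 0 (Set.Ioi 0)) (nhds 1) ∧
    Filter.Tendsto (fun s => (1 - takacsPhi lam FA s) / s) (nhdsWithin 0 (Set.Ioi 0))
      (nhds ((1 / lam) * Real.exp (lam * M))) ∧
    ∀ {Ω : Type} [MeasurableSpace Ω] (μ : Measure Ω) [IsProbabilityMeasure μ]
      (τ : Ω → ℝ), Measurable τ → (∀ ω, 0 ≤ τ ω) → Integrable τ μ →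
      (∀ s : ℝ, 0 < s → takacsPhi lam FA s = ∫ ω, Real.exp (-s * τ ω) ∂μ) →
      ∫ ω, τ ω ∂μ = (1 / lam) * Real.exp (lam * M) := by
  set I : ℝ → ℝ := fun s =>
    ∫ t in Set.Ioi (0:ℝ), Real.exp (-s * t - lam * ∫ u in (0:ℝ)..t, (1 - FA u)) with hI
  have hkey : Tendsto (fun s => s * I s) (nhdsWithin 0 (Set.Ioi 0))
      (nhds (Real.exp (-(lam * M)))) := takacs_aux_key hlam hmeas h01 hMint hM
  have hexpne : Real.exp (-(lam * M)) ≠ 0 := (Real.exp_pos _).ne'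
  have hid0 : Tendsto (fun s : ℝ => s) (nhdsWithin 0 (Set.Ioi 0)) (nhds 0) :=
    Filter.tendsto_id.mono_right nhdsWithin_le_nhds
  have hadd : Tendsto (fun s : ℝ => lam + s) (nhdsWithin 0 (Set.Ioi 0)) (nhds lam) := by
    simpa using Tendsto.add
      (tendsto_const_nhds : Tendsto (fun _ : ℝ => lam) (nhdsWithin 0 (Set.Ioi 0)) (nhds lam)) hid0
  have hfrac : Tendsto (fun s : ℝ => 1 / (lam + s)) (nhdsWithin 0 (Set.Ioi 0))
      (nhds (1 / lam)) := tendsto_const_nhds.div hadd hlam.ne'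
  -- (I s)⁻¹ → 0
  have hIinv : Tendsto (fun s => (I s)⁻¹) (nhdsWithin 0 (Set.Ioi 0)) (nhds 0) := by
    have h1 : Tendsto (fun s => s * (s * I s)⁻¹) (nhdsWithin 0 (Set.Ioi 0))
        (nhds (0 * (Real.exp (-(lam * M)))⁻¹)) := hid0.mul (hkey.inv₀ hexpne)
    rw [zero_mul] at h1
    refine Tendsto.congr' ?_ h1
    filter_upwards [self_mem_nhdsWithin] with s hs
    rw [Set.mem_Ioi] at hs
    rw [mul_inv]
    rw [← mul_assoc, mul_inv_cancel₀ hs.ne', one_mul]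
  have hPart1 : Tendsto (takacsPhi lam FA) (nhdsWithin 0 (Set.Ioi 0)) (nhds 1) := by
    have hval : (1:ℝ) = 1 - (1/lam) * 0 := by ring
    rw [hval]
    exact Tendsto.sub
      (tendsto_const_nhds : Tendsto (fun _ : ℝ => (1:ℝ)) (nhdsWithin 0 (Set.Ioi 0)) (nhds 1))
      (hfrac.mul hIinv)
  have hPart2 : Tendsto (fun s => (1 - takacsPhi lam FA s) / s) (nhdsWithin 0 (Set.Ioi 0))
      (nhds ((1 / lam) * Real.exp (lam * M))) := by
    have h1 : Tendsto (fun s : ℝ => (1 / (lam + s)) * (s * I s)⁻¹) (nhdsWithin 0 (Set.Ioi 0))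
        (nhds ((1 / lam) * (Real.exp (-(lam * M)))⁻¹)) := hfrac.mul (hkey.inv₀ hexpne)
    rw [← Real.exp_neg, neg_neg] at h1
    refine Tendsto.congr' ?_ h1
    filter_upwards [self_mem_nhdsWithin] with s hs
    rw [Set.mem_Ioi] at hs
    simp only [takacsPhi, sub_sub_cancel]
    rw [mul_inv, div_eq_mul_inv, div_eq_mul_inv]
    ring
  refine ⟨hPart1, hPart2, ?_⟩
  intro Ω _ μ _ τ hτmeas hτnn hτint hΦ
  -- DCT for the expectation
  have hDCT : Tendsto (fun s : ℝ => ∫ ω, (1 - Real.exp (-s * τ ω)) / s ∂μ)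
      (nhdsWithin 0 (Set.Ioi 0)) (nhds (∫ ω, τ ω ∂μ)) := by
    apply MeasureTheory.tendsto_integral_filter_of_dominated_convergence τ
    · filter_upwards [self_mem_nhdsWithin] with s _
      have : Measurable fun ω => (1 - Real.exp (-s * τ ω)) / s := by fun_prop
      exact this.aestronglyMeasurable
    · filter_upwards [self_mem_nhdsWithin] with s hs
      rw [Set.mem_Ioi] at hs
      refine ae_of_all _ fun ω => ?_
      set x := τ ω with hx
      have hx0 : 0 ≤ x := hτnn ω
      have hb1 : Real.exp (-s * x) ≤ 1 := by
        rw [← Real.exp_zero]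
        apply Real.exp_le_exp.2
        nlinarith
      have hb2 : 1 - s * x ≤ Real.exp (-s * x) := by
        have := Real.add_one_le_exp (-s * x)
        linarith
      rw [Real.norm_eq_abs, abs_of_nonneg (div_nonneg (by linarith) hs.le)]
      rw [div_le_iff₀ hs]
      nlinarith
    · exact hτint
    · exact ae_of_all _ fun ω => takacs_aux_slope (τ ω)
  have heq : (fun s : ℝ => (1 - takacsPhi lam FA s) / s) =ᶠ[nhdsWithin 0 (Set.Ioi 0)]
      (fun s : ℝ => ∫ ω, (1 - Real.exp (-s * τ ω)) / s ∂μ) := by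
    filter_upwards [self_mem_nhdsWithin] with s hs
    rw [Set.mem_Ioi] at hs
    have hint : Integrable (fun ω => Real.exp (-s * τ ω)) μ := by
      refine (integrable_const (1:ℝ)).mono'
        ((Real.measurable_exp.comp (hτmeas.const_mul (-s))).aestronglyMeasurable)
        (ae_of_all _ fun ω => ?_)
      rw [Real.norm_eq_abs, abs_of_nonneg (Real.exp_pos _).le, ← Real.exp_zero]
      apply Real.exp_le_exp.2
      nlinarith [hτnn ω]
    rw [hΦ s hs]
    rw [show (fun ω => (1 - Real.exp (-s * τ ω)) / s) =
        (fun ω => ((1:ℝ) - Real.exp (-s * τ ω)) * s⁻¹) by funext ω; rw [div_eq_mul_inv]]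
    rw [MeasureTheory.integral_mul_const, integral_sub (integrable_const 1) hint]
    simp [div_eq_mul_inv]
  exact tendsto_nhds_unique (Tendsto.congr' heq.symm hDCT) hPart2
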